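/- Let ⟨·,·⟩_G be an inner product on ℝ^m (possibly degenerate: a PSD bilinear form), ã ∈ ℝ^m, r_j ≥ 0. If γ ∈ ℝ^m minimizes F(γ) = ‖γ‖_G² − 2 Σ_j γ_j ã_j + 2 Σ_j √(r_j) |γ_j|, then γ satisfies the constraints |⟨γ, e_j⟩_G − ã_j| ≤ √(r_j) for every j ∈ {1,…,m}. -/

import Mathlib

open Matrix

/-- Any minimizer of the penalized LASSO criterion satisfies the confidence-region
constraints (KKT direction of Proposition 3.1). -/
theorem stmt_11 {m : ℕ} (M : Matrix (Fin m) (Fin m) ℝ) (hM : M.PosSemidef)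
    (atil : Fin m → ℝ) (r : Fin m → ℝ) (hr : ∀ j, 0 ≤ r j)
    (γ : Fin m → ℝ)
    (hmin : ∀ γ' : Fin m → ℝ,
      γ ⬝ᵥ M.mulVec γ - 2 * ∑ j, γ j * atil j + 2 * ∑ j, Real.sqrt (r j) * |γ j| ≤
      γ' ⬝ᵥ M.mulVec γ' - 2 * ∑ j, γ' j * atil j + 2 * ∑ j, Real.sqrt (r j) * |γ' j|) :
    ∀ j, |γ ⬝ᵥ M.mulVec (Pi.single j 1) - atil j| ≤ Real.sqrt (r j) := by
  intro j
  have hsym : Mᵀ = M := by simpa using hM.1.eq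
  have hsymm : ∀ x y : Fin m → ℝ, x ⬝ᵥ M.mulVec y = y ⬝ᵥ M.mulVec x := by
    intro x y
    rw [Matrix.dotProduct_mulVec, ← Matrix.mulVec_transpose, hsym, dotProduct_comm]
  set e : Fin m → ℝ := Pi.single j 1 with he
  set c : ℝ := γ ⬝ᵥ M.mulVec e with hc
  set d : ℝ := e ⬝ᵥ M.mulVec e with hd
  have hd0 : 0 ≤ d := by simpa using hM.dotProduct_mulVec_nonneg e
  have hsqrt : 0 ≤ Real.sqrt (r j) := Real.sqrt_nonneg _
  -- key first-order inequality
  have key : ∀ t : ℝ, 0 ≤ 2 * t * (c - atil j) + t ^ 2 * d + 2 * Real.sqrt (r j) * |t| := by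
    intro t
    have h := hmin (γ + t • e)
    have hq : (γ + t • e) ⬝ᵥ M.mulVec (γ + t • e)
        = γ ⬝ᵥ M.mulVec γ + 2 * t * c + t ^ 2 * d := by
      have h1 : e ⬝ᵥ M.mulVec γ = c := hsymm e γ
      simp only [add_dotProduct, dotProduct_add, Matrix.mulVec_add,
        Matrix.mulVec_smul, smul_dotProduct, dotProduct_smul, smul_eq_mul,
        h1, ← hc, ← hd]
      ring
    have hl : ∑ i, (γ + t • e) i * atil i = (∑ i, γ i * atil i) + t * atil j := by
      simp only [Pi.add_apply, Pi.smul_apply, smul_eq_mul, add_mul,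
        Finset.sum_add_distrib]
      congr 1
      rw [he]
      simp [Pi.single_apply, mul_assoc]
    have hp : ∑ i, Real.sqrt (r i) * |(γ + t • e) i|
        ≤ (∑ i, Real.sqrt (r i) * |γ i|) + Real.sqrt (r j) * |t| := by
      have : ∀ i ∈ Finset.univ, Real.sqrt (r i) * |(γ + t • e) i|
          ≤ Real.sqrt (r i) * |γ i| + (if i = j then Real.sqrt (r j) * |t| else 0) := by
        intro i _
        by_cases hij : i = j
        · subst hij
          simp only [if_pos, Pi.add_apply, Pi.smul_apply, he, Pi.single_eq_same,
            smul_eq_mul, mul_one, eq_self_iff_true, if_true]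
          have := abs_add_le (γ i) t
          nlinarith [Real.sqrt_nonneg (r i)]
        · simp only [if_neg hij, add_zero, Pi.add_apply, Pi.smul_apply, he,
            Pi.single_eq_of_ne hij, smul_eq_mul, mul_zero, add_zero]
          exact le_refl _
      calc ∑ i, Real.sqrt (r i) * |(γ + t • e) i|
          ≤ ∑ i, (Real.sqrt (r i) * |γ i| + (if i = j then Real.sqrt (r j) * |t| else 0)) :=
            Finset.sum_le_sum this
        _ = (∑ i, Real.sqrt (r i) * |γ i|) + Real.sqrt (r j) * |t| := by
            rw [Finset.sum_add_distrib, Finset.sum_ite_eq' Finset.univ j]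
            simp
    rw [hq, hl] at h
    nlinarith [h, hp]
  rw [abs_le]
  constructor
  · -- atil j - √r ≤ c, i.e. -(√r) ≤ c - atil j
    by_contra hcon
    push_neg at hcon
    set x : ℝ := atil j - Real.sqrt (r j) - c with hx
    have hx0 : 0 < x := by simp only [hx]; linarith
    have hs0 : 0 < x / (d + 1) := by positivity
    set s : ℝ := x / (d + 1) with hsdef
    have hd1 : 0 < d + 1 := by linarith
    have hsx : s * (d + 1) = x := div_mul_cancel₀ _ (ne_of_gt hd1)
    have h := key s
    rw [abs_of_pos hs0] at h
    have hexp : 2 * s * (c - atil j) + 2 * Real.sqrt (r j) * s = -(2 * (s ^ 2 * (d + 1))) := by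
      have : s * x = s ^ 2 * (d + 1) := by rw [← hsx]; ring
      rw [← this, hx]; ring
    nlinarith [h, hexp, mul_pos hs0 hs0, mul_nonneg (mul_pos hs0 hs0).le hd0]
  · by_contra hcon
    push_neg at hcon
    set x : ℝ := c - atil j - Real.sqrt (r j) with hx
    have hx0 : 0 < x := by simp only [hx]; linarith
    have hs0 : 0 < x / (d + 1) := by positivity
    set s : ℝ := x / (d + 1) with hsdef
    have hd1 : 0 < d + 1 := by linarith
    have hsx : s * (d + 1) = x := div_mul_cancel₀ _ (ne_of_gt hd1)
    have h := key (-s)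
    rw [abs_neg, abs_of_pos hs0] at h
    have hexp : 2 * (-s) * (c - atil j) + 2 * Real.sqrt (r j) * s = -(2 * (s ^ 2 * (d + 1))) := by
      have : s * x = s ^ 2 * (d + 1) := by rw [← hsx]; ring
      rw [← this, hx]; ring
    nlinarith [h, hexp, mul_pos hs0 hs0, mul_nonneg (mul_pos hs0 hs0).le hd0]
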